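/- Fix s ∈ ℕ and u > 0. There exists a constant C = C(s,u) such that for any disjoint closed intervals I₁,…,I_s with minimal gap σ, maximal half-length δ, and diameter D of the union satisfying σ/D ≥ u, and for all y₁,…,y_s ∈ [−1,1] and n ∈ ℕ, there exists a polynomial P of degree ≤ n with |P(t) − y_i| ≤ (C·δ/D)^{⌊(n+1)/s⌋} for all t ∈ I_i, all i. -/

import Mathlib

section SDauxSection
open Polynomial Finset
set_option maxHeartbeats 2000000

namespace SDaux

/-- coefficientwise majorization -/
def Maj (p P : ℝ[X]) : Prop := ∀ j, |p.coeff j| ≤ P.coeff j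

lemma Maj.nonneg {p P : ℝ[X]} (h : Maj p P) (j : ℕ) : 0 ≤ P.coeff j :=
  le_trans (abs_nonneg _) (h j)

lemma maj_one : Maj (1 : ℝ[X]) 1 := by
  intro j
  rcases Nat.eq_zero_or_pos j with hj | hj
  · subst hj; simp
  · rw [Polynomial.coeff_one]
    simp [Nat.pos_iff_ne_zero.mp hj]

lemma maj_mul {p P q Q : ℝ[X]} (hp : Maj p P) (hq : Maj q Q) : Maj (p * q) (P * Q) := by
  intro j
  rw [Polynomial.coeff_mul, Polynomial.coeff_mul]
  calc |∑ x ∈ Finset.HasAntidiagonal.antidiagonal j, p.coeff x.1 * q.coeff x.2|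
      ≤ ∑ x ∈ Finset.HasAntidiagonal.antidiagonal j, |p.coeff x.1 * q.coeff x.2| := Finset.abs_sum_le_sum_abs _ _
    _ ≤ ∑ x ∈ Finset.HasAntidiagonal.antidiagonal j, P.coeff x.1 * Q.coeff x.2 := by
        apply Finset.sum_le_sum
        intro x _
        rw [abs_mul]
        exact mul_le_mul (hp x.1) (hq x.2) (abs_nonneg _) (hp.nonneg x.1)

lemma maj_pow {p P : ℝ[X]} (hp : Maj p P) (k : ℕ) : Maj (p ^ k) (P ^ k) := by
  induction k with
  | zero => simpa using maj_one
  | succ k ih => rw [pow_succ, pow_succ]; exact maj_mul ih hp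

lemma maj_prod {ι : Type*} (t : Finset ι) (f g : ι → ℝ[X]) (h : ∀ i ∈ t, Maj (f i) (g i)) :
    Maj (∏ i ∈ t, f i) (∏ i ∈ t, g i) := by
  classical
  induction t using Finset.induction_on with
  | empty => simpa using maj_one
  | @insert a t₀ hx ih =>
    rw [Finset.prod_insert hx, Finset.prod_insert hx]
    exact maj_mul (h a (Finset.mem_insert_self _ _))
      (fun j => ih (fun i hi => h i (Finset.mem_insert_of_mem hi)) j)

lemma maj_sum {ι : Type*} (t : Finset ι) (f g : ι → ℝ[X]) (h : ∀ i ∈ t, Maj (f i) (g i)) :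
    Maj (∑ i ∈ t, f i) (∑ i ∈ t, g i) := by
  intro j
  rw [Polynomial.finset_sum_coeff, Polynomial.finset_sum_coeff]
  calc |∑ i ∈ t, (f i).coeff j| ≤ ∑ i ∈ t, |(f i).coeff j| := Finset.abs_sum_le_sum_abs _ _
    _ ≤ ∑ i ∈ t, (g i).coeff j := Finset.sum_le_sum fun i hi => h i hi j

lemma maj_sub {p P q Q : ℝ[X]} (hp : Maj p P) (hq : Maj q Q) : Maj (p - q) (P + Q) := by
  intro j
  rw [Polynomial.coeff_sub, Polynomial.coeff_add]
  exact le_trans (abs_sub _ _) (add_le_add (hp j) (hq j))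


/-- truncation of a polynomial below degree m -/
noncomputable def trunc (m : ℕ) (p : ℝ[X]) : ℝ[X] :=
  ∑ r ∈ Finset.range m, Polynomial.monomial r (p.coeff r)

lemma coeff_trunc (m : ℕ) (p : ℝ[X]) (j : ℕ) :
    (trunc m p).coeff j = if j < m then p.coeff j else 0 := by
  rw [trunc, Polynomial.finset_sum_coeff]
  simp only [Polynomial.coeff_monomial]
  rw [Finset.sum_ite_eq' (Finset.range m) j (fun r => p.coeff r)]
  simp [Finset.mem_range]

lemma maj_trunc {p P : ℝ[X]} (hp : Maj p P) (m : ℕ) : Maj (trunc m p) P := by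
  intro j
  rw [coeff_trunc]
  split
  · exact hp j
  · simpa using hp.nonneg j

lemma X_pow_dvd_sub_trunc (m : ℕ) (p : ℝ[X]) : (X : ℝ[X]) ^ m ∣ p - trunc m p := by
  rw [Polynomial.X_pow_dvd_iff]
  intro d hd
  rw [Polynomial.coeff_sub, coeff_trunc, if_pos hd, sub_self]

lemma natDegree_trunc_le (m : ℕ) (p : ℝ[X]) : (trunc (m + 1) p).natDegree ≤ m := by
  apply Polynomial.natDegree_sum_le_of_forall_le
  intro r hr
  exact le_trans (Polynomial.natDegree_monomial_le _) (by
    simpa using Nat.lt_succ_iff.mp (Finset.mem_range.mp hr))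

lemma maj_eval_le {p P : ℝ[X]} (hp : Maj p P) {w x : ℝ} (hw : |w| ≤ x) :
    |p.eval w| ≤ P.eval x := by
  set N := max p.natDegree P.natDegree + 1 with hN
  rw [Polynomial.eval_eq_sum_range' (by omega : p.natDegree < N),
      Polynomial.eval_eq_sum_range' (by omega : P.natDegree < N)]
  calc |∑ j ∈ Finset.range N, p.coeff j * w ^ j|
      ≤ ∑ j ∈ Finset.range N, |p.coeff j * w ^ j| := Finset.abs_sum_le_sum_abs _ _
    _ ≤ ∑ j ∈ Finset.range N, P.coeff j * x ^ j := by
        apply Finset.sum_le_sum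
        intro j _
        rw [abs_mul, abs_pow]
        exact mul_le_mul (hp j) (pow_le_pow_left₀ (abs_nonneg _) hw j)
          (by positivity) (hp.nonneg j)

lemma maj_eval_dvd_le {p P : ℝ[X]} (hp : Maj p P) {m : ℕ} (hd : (X : ℝ[X]) ^ m ∣ p)
    {w x : ℝ} (hw : |w| ≤ x) (hx : 0 < x) :
    |p.eval w| ≤ (|w| / x) ^ m * P.eval x := by
  set N := max p.natDegree P.natDegree + 1 with hN
  rw [Polynomial.eval_eq_sum_range' (by omega : p.natDegree < N),
      Polynomial.eval_eq_sum_range' (by omega : P.natDegree < N)]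
  rw [Finset.mul_sum]
  calc |∑ j ∈ Finset.range N, p.coeff j * w ^ j|
      ≤ ∑ j ∈ Finset.range N, |p.coeff j * w ^ j| := Finset.abs_sum_le_sum_abs _ _
    _ ≤ ∑ j ∈ Finset.range N, (|w| / x) ^ m * (P.coeff j * x ^ j) := by
        apply Finset.sum_le_sum
        intro j _
        rw [abs_mul, abs_pow]
        rcases lt_or_ge j m with hj | hj
        · rw [(Polynomial.X_pow_dvd_iff.mp hd) j hj]
          simp only [abs_zero, zero_mul]
          exact mul_nonneg (by positivity) (mul_nonneg (hp.nonneg j) (by positivity))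
        · have h1 : |p.coeff j| * |w| ^ j ≤ P.coeff j * |w| ^ j :=
            mul_le_mul_of_nonneg_right (hp j) (by positivity)
          refine le_trans h1 ?_
          have h2 : |w| ^ j ≤ (|w| / x) ^ m * x ^ j := by
            have hwx : |w| / x ≤ 1 := (div_le_one hx).mpr hw
            have : |w| ^ j = (|w| / x) ^ j * x ^ j := by
              rw [div_pow]; field_simp
            rw [this]
            apply mul_le_mul_of_nonneg_right _ (by positivity)
            exact pow_le_pow_of_le_one (by positivity) hwx hj
          calc P.coeff j * |w| ^ j ≤ P.coeff j * ((|w| / x) ^ m * x ^ j) :=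
                mul_le_mul_of_nonneg_left h2 (hp.nonneg j)
            _ = (|w| / x) ^ m * (P.coeff j * x ^ j) := by ring

lemma maj_eval_deg_le {p P : ℝ[X]} (hp : Maj p P) {d : ℕ} (hd : p.natDegree ≤ d)
    {w x : ℝ} (hw : x ≤ |w|) (hx : 0 < x) :
    |p.eval w| ≤ (|w| / x) ^ d * P.eval x := by
  set N := max p.natDegree P.natDegree + 1 with hN
  rw [Polynomial.eval_eq_sum_range' (by omega : p.natDegree < N),
      Polynomial.eval_eq_sum_range' (by omega : P.natDegree < N)]
  rw [Finset.mul_sum]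
  calc |∑ j ∈ Finset.range N, p.coeff j * w ^ j|
      ≤ ∑ j ∈ Finset.range N, |p.coeff j * w ^ j| := Finset.abs_sum_le_sum_abs _ _
    _ ≤ ∑ j ∈ Finset.range N, (|w| / x) ^ d * (P.coeff j * x ^ j) := by
        apply Finset.sum_le_sum
        intro j _
        rw [abs_mul, abs_pow]
        rcases le_or_gt j d with hj | hj
        · have hwx : (1 : ℝ) ≤ |w| / x := (one_le_div hx).mpr hw
          have h2 : |w| ^ j ≤ (|w| / x) ^ d * x ^ j := by
            have : |w| ^ j = (|w| / x) ^ j * x ^ j := by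
              rw [div_pow]; field_simp
            rw [this]
            apply mul_le_mul_of_nonneg_right _ (by positivity)
            exact pow_le_pow_right₀ hwx hj
          calc |p.coeff j| * |w| ^ j ≤ P.coeff j * |w| ^ j :=
                mul_le_mul_of_nonneg_right (hp j) (by positivity)
            _ ≤ P.coeff j * ((|w| / x) ^ d * x ^ j) :=
                mul_le_mul_of_nonneg_left h2 (hp.nonneg j)
            _ = (|w| / x) ^ d * (P.coeff j * x ^ j) := by ring
        · rw [Polynomial.coeff_eq_zero_of_natDegree_lt (lt_of_le_of_lt hd hj)]
          simp only [abs_zero, zero_mul]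
          exact mul_nonneg (by positivity) (mul_nonneg (hp.nonneg j) (by positivity))


lemma dvd_prod_sub_one {ι : Type*} (t : Finset ι) (f : ι → ℝ[X]) (q : ℝ[X])
    (h : ∀ j ∈ t, q ∣ (f j - 1)) : q ∣ (∏ j ∈ t, f j) - 1 := by
  classical
  induction t using Finset.induction_on with
  | empty => simp
  | @insert a t₀ hx ih =>
    rw [Finset.prod_insert hx]
    have h1 : (f a) * (∏ j ∈ t₀, f j) - 1
        = f a * ((∏ j ∈ t₀, f j) - 1) + (f a - 1) := by ring
    rw [h1]
    exact dvd_add (Dvd.dvd.mul_left (ih fun j hj => h j (Finset.mem_insert_of_mem hj)) _)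
      (h a (Finset.mem_insert_self _ _))

lemma dvd_pow_sub_one {q p : ℝ[X]} (h : q ∣ p - 1) (k : ℕ) : q ∣ p ^ k - 1 := by
  have hg := geom_sum_mul p k
  have : p ^ k - 1 = (∑ i ∈ Finset.range k, p ^ i) * (p - 1) := hg.symm
  rw [this]
  exact Dvd.dvd.mul_left h _

lemma maj_CX {a b : ℝ} (hab : |a| ≤ b) : Maj (C a * X) (C b * X) := by
  intro j
  simp only [Polynomial.coeff_C_mul, Polynomial.coeff_X]
  rcases eq_or_ne j 1 with hj | hj
  · simp [hj, hab]
  · simp [Ne.symm hj]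

lemma geom_half_le_two (m : ℕ) : ∑ r ∈ Finset.range m, ((2:ℝ)⁻¹) ^ r ≤ 2 := by
  have h := geom_sum_eq (by norm_num : ((2:ℝ)⁻¹) ≠ 1) m
  rw [h]
  have h2 : (0:ℝ) ≤ (2:ℝ)⁻¹ ^ m := by positivity
  rw [div_le_iff_of_neg (by norm_num : ((2:ℝ)⁻¹ - 1) < 0)]
  nlinarith

lemma construction (s m : ℕ) (hm : 1 ≤ m) (σ : ℝ) (hσ : 0 < σ) (i : Fin s) (c : Fin s → ℝ)
    (hsep : ∀ j, j ≠ i → σ ≤ |c i - c j|) :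
    ∃ B T : ℝ[X],
      B.natDegree ≤ (s - 1) * m ∧ T.natDegree ≤ m - 1 ∧
      (∀ w : ℝ, B.eval w = ∏ j ∈ Finset.univ.erase i, (1 + (c i - c j)⁻¹ * w) ^ m) ∧
      (∀ w : ℝ, |w| ≤ σ / 2 → |(B * T).eval w - 1| ≤ (|w| / (σ / 2)) ^ m * (2 * 3 ^ s) ^ m) ∧
      (∀ w : ℝ, σ / 2 ≤ |w| → |T.eval w| ≤ (|w| / (σ / 2)) ^ (m - 1) * 2 ^ (s * m)) := by
  classical
  set e : Fin s → ℝ := fun j => (c i - c j)⁻¹ with he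
  set z : Fin s → ℝ[X] := fun j => C (-(e j)) * X with hz
  set F : Fin s → ℝ[X] := fun j => 1 - z j with hF
  set M : Fin s → ℝ[X] := fun j => ∑ r ∈ Finset.range m, (z j) ^ r with hM
  set B : ℝ[X] := ∏ j ∈ Finset.univ.erase i, (F j) ^ m with hB
  set U : ℝ[X] := ∏ j ∈ Finset.univ.erase i, (M j) ^ m with hU
  set T : ℝ[X] := trunc m U with hT
  -- separation gives |e j| ≤ σ⁻¹ for j ≠ i
  have he_bound : ∀ j, j ≠ i → |e j| ≤ σ⁻¹ := by
    intro j hj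
    rw [he]
    simp only [abs_inv]
    exact inv_anti₀ hσ (hsep j hj)
  -- majorants
  set zh : ℝ[X] := C σ⁻¹ * X with hzh
  set Fh : ℝ[X] := 1 + zh with hFh
  set Mh : ℝ[X] := ∑ r ∈ Finset.range m, zh ^ r with hMh
  set Bh : ℝ[X] := ∏ _j ∈ Finset.univ.erase i, Fh ^ m with hBh
  set Uh : ℝ[X] := ∏ _j ∈ Finset.univ.erase i, Mh ^ m with hUh
  have majz : ∀ j, j ≠ i → Maj (z j) zh := by
    intro j hj
    exact maj_CX (by rw [abs_neg]; exact he_bound j hj)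
  have majF : ∀ j, j ≠ i → Maj (F j) Fh := by
    intro j hj
    have := maj_sub maj_one (majz j hj)
    simpa [hF, hFh] using this
  have majM : ∀ j, j ≠ i → Maj (M j) Mh := by
    intro j hj
    exact maj_sum _ _ _ fun r _ => maj_pow (majz j hj) r
  have majB : Maj B Bh :=
    maj_prod _ _ _ fun j hj => maj_pow (majF j (Finset.ne_of_mem_erase hj)) m
  have majU : Maj U Uh :=
    maj_prod _ _ _ fun j hj => maj_pow (majM j (Finset.ne_of_mem_erase hj)) m
  have majT : Maj T Uh := maj_trunc majU m
  have majE : Maj (B * T - 1) (Bh * Uh + 1) := maj_sub (maj_mul majB majT) maj_one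
  -- divisibility
  have hXz : ∀ j, (X : ℝ[X]) ∣ z j := fun j => Dvd.intro_left _ rfl
  have hFM : ∀ j, F j * M j = 1 - (z j) ^ m := by
    intro j
    have hg := geom_sum_mul (z j) m
    rw [hF, hM]
    simp only
    linear_combination -hg
  have hdvdBU : (X : ℝ[X]) ^ m ∣ B * U - 1 := by
    have hBU : B * U = ∏ j ∈ Finset.univ.erase i, (F j * M j) ^ m := by
      rw [hB, hU, ← Finset.prod_mul_distrib]
      congr 1
      ext j
      rw [mul_pow]
    rw [hBU]
    apply dvd_prod_sub_one
    intro j _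
    rw [hFM j]
    apply dvd_pow_sub_one
    have hdd : (X : ℝ[X]) ^ m ∣ (z j) ^ m := pow_dvd_pow_of_dvd (hXz j) m
    have h1 : (1 : ℝ[X]) - (z j) ^ m - 1 = -((z j) ^ m) := by ring
    rw [h1]
    exact dvd_neg.mpr hdd
  have hdvdE : (X : ℝ[X]) ^ m ∣ B * T - 1 := by
    have h1 : B * T - 1 = (B * U - 1) - B * (U - T) := by ring
    rw [h1]
    exact dvd_sub hdvdBU (Dvd.dvd.mul_left (X_pow_dvd_sub_trunc m U) B)
  -- degrees
  have hcard : (Finset.univ.erase i).card = s - 1 := by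
    rw [Finset.card_erase_of_mem (Finset.mem_univ i)]
    simp
  have hdegB : B.natDegree ≤ (s - 1) * m := by
    calc B.natDegree ≤ ∑ j ∈ Finset.univ.erase i, ((F j) ^ m).natDegree :=
          Polynomial.natDegree_prod_le _ _
      _ ≤ ∑ _j ∈ Finset.univ.erase i, m := by
          apply Finset.sum_le_sum
          intro j _
          refine le_trans (Polynomial.natDegree_pow_le) ?_
          have hFd : (F j).natDegree ≤ 1 := by
            refine le_trans (Polynomial.natDegree_sub_le _ _) ?_
            simp only [Polynomial.natDegree_one]
            refine max_le (by omega) ?_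
            exact le_trans (Polynomial.natDegree_C_mul_le _ _) Polynomial.natDegree_X_le
          calc m * (F j).natDegree ≤ m * 1 := Nat.mul_le_mul_left m hFd
            _ = m := by omega
      _ = (s - 1) * m := by rw [Finset.sum_const, hcard, smul_eq_mul]
  have hdegT : T.natDegree ≤ m - 1 := by
    have hm' : m = (m - 1) + 1 := by omega
    rw [hT, hm']
    exact natDegree_trunc_le _ _
  -- eval of B
  have hevalB : ∀ w : ℝ, B.eval w = ∏ j ∈ Finset.univ.erase i, (1 + (c i - c j)⁻¹ * w) ^ m := by
    intro w
    rw [hB, Polynomial.eval_prod]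
    apply Finset.prod_congr rfl
    intro j _
    rw [Polynomial.eval_pow]
    congr 1
    simp [hF, hz, he]
    try ring
  -- majorant evaluations at σ/2
  have hx : (0:ℝ) < σ / 2 := by linarith
  have hzh_eval : zh.eval (σ / 2) = 2⁻¹ := by
    simp [hzh]
    field_simp
  have hMh_eval : Mh.eval (σ / 2) ≤ 2 := by
    rw [hMh, Polynomial.eval_finset_sum]
    simp only [Polynomial.eval_pow, hzh_eval]
    exact geom_half_le_two m
  have hMh_nonneg : 0 ≤ Mh.eval (σ / 2) := by
    rw [hMh, Polynomial.eval_finset_sum]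
    apply Finset.sum_nonneg
    intro r _
    rw [Polynomial.eval_pow, hzh_eval]
    positivity
  have hFh_eval : Fh.eval (σ / 2) = 3 / 2 := by
    simp [hFh, hzh]
    field_simp
    ring
  have hBh_eval : Bh.eval (σ / 2) ≤ (3 / 2 : ℝ) ^ (s * m) := by
    rw [hBh, Polynomial.eval_prod]
    simp only [Polynomial.eval_pow, hFh_eval]
    rw [Finset.prod_const, hcard, ← pow_mul]
    apply pow_le_pow_right₀ (by norm_num)
    calc m * (s - 1) = (s - 1) * m := Nat.mul_comm _ _
      _ ≤ s * m := Nat.mul_le_mul_right m (Nat.sub_le s 1)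
  have hBh_nonneg : 0 ≤ Bh.eval (σ / 2) := by
    rw [hBh, Polynomial.eval_prod]
    apply Finset.prod_nonneg
    intro j _
    rw [Polynomial.eval_pow, hFh_eval]
    positivity
  have hUh_eval : Uh.eval (σ / 2) ≤ (2 : ℝ) ^ (s * m) := by
    rw [hUh, Polynomial.eval_prod]
    simp only [Polynomial.eval_pow]
    calc ∏ _j ∈ Finset.univ.erase i, Mh.eval (σ / 2) ^ m
        ≤ ∏ _j ∈ Finset.univ.erase i, (2:ℝ) ^ m := by
          apply Finset.prod_le_prod
          · intro j _; positivity
          · intro j _; exact pow_le_pow_left₀ hMh_nonneg hMh_eval m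
      _ = ((2:ℝ) ^ m) ^ (s - 1) := by rw [Finset.prod_const, hcard]
      _ = (2:ℝ) ^ (m * (s - 1)) := by rw [← pow_mul]
      _ ≤ (2:ℝ) ^ (s * m) := by
          apply pow_le_pow_right₀ (by norm_num)
          calc m * (s - 1) = (s - 1) * m := Nat.mul_comm _ _
            _ ≤ s * m := Nat.mul_le_mul_right m (Nat.sub_le s 1)
  have hUh_nonneg : 0 ≤ Uh.eval (σ / 2) := by
    rw [hUh, Polynomial.eval_prod]
    apply Finset.prod_nonneg
    intro j _
    rw [Polynomial.eval_pow]
    positivity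
  have hEh_eval : (Bh * Uh + 1).eval (σ / 2) ≤ (2 * 3 ^ s : ℝ) ^ m := by
    rw [Polynomial.eval_add, Polynomial.eval_mul, Polynomial.eval_one]
    have h1 : Bh.eval (σ / 2) * Uh.eval (σ / 2) ≤ (3 / 2 : ℝ) ^ (s * m) * 2 ^ (s * m) :=
      mul_le_mul hBh_eval hUh_eval hUh_nonneg (by positivity)
    have h2 : (3 / 2 : ℝ) ^ (s * m) * 2 ^ (s * m) = 3 ^ (s * m) := by
      rw [← mul_pow]; norm_num
    have h3 : (3:ℝ) ^ (s * m) + 1 ≤ 2 * 3 ^ (s * m) := by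
      have : (1:ℝ) ≤ 3 ^ (s * m) := one_le_pow₀ (by norm_num)
      nlinarith [this]
    have h4 : (2 : ℝ) * 3 ^ (s * m) ≤ (2 * 3 ^ s : ℝ) ^ m := by
      rw [mul_pow, ← pow_mul]
      have h5 : (2:ℝ) ≤ 2 ^ m := by
        calc (2:ℝ) = 2 ^ 1 := (pow_one 2).symm
          _ ≤ 2 ^ m := pow_le_pow_right₀ (by norm_num) hm
      apply mul_le_mul h5 (le_refl _) (by positivity) (by positivity)
    linarith
  refine ⟨B, T, hdegB, hdegT, hevalB, ?_, ?_⟩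
  · intro w hw
    have h1 : |(B * T - 1).eval w| ≤ (|w| / (σ / 2)) ^ m * (Bh * Uh + 1).eval (σ / 2) :=
      maj_eval_dvd_le majE hdvdE hw hx
    have h2 : (B * T - 1).eval w = (B * T).eval w - 1 := by simp
    rw [h2] at h1
    refine le_trans h1 ?_
    apply mul_le_mul_of_nonneg_left hEh_eval (by positivity)
  · intro w hw
    have h1 : |T.eval w| ≤ (|w| / (σ / 2)) ^ (m - 1) * Uh.eval (σ / 2) :=
      maj_eval_deg_le majT hdegT hw hx
    refine le_trans h1 ?_
    apply mul_le_mul_of_nonneg_left hUh_eval ?_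
    have : (1:ℝ) ≤ |w| / (σ / 2) := (one_le_div hx).mpr hw
    positivity

end SDaux
end SDauxSection

open Polynomial Set

set_option maxHeartbeats 2000000 in
open SDaux in
theorem small_delta_En_bound (s : ℕ) (hs : 1 ≤ s) (u : ℝ) (hu : 0 < u) :
    ∃ C : ℝ, ∀ (a b : Fin s → ℝ) (σ δ D : ℝ),
      (∀ i, a i ≤ b i) →
      (Pairwise fun i j => Disjoint (Set.Icc (a i) (b i)) (Set.Icc (a j) (b j))) →
      0 < σ →
      (∀ i j : Fin s, i ≠ j → ∀ x ∈ Set.Icc (a i) (b i), ∀ t ∈ Set.Icc (a j) (b j),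
        σ ≤ |x - t|) →
      0 < δ →
      (∀ i, b i - a i ≤ 2 * δ) →
      0 < D →
      (∀ x ∈ ⋃ i, Set.Icc (a i) (b i), ∀ t ∈ ⋃ i, Set.Icc (a i) (b i), |x - t| ≤ D) →
      u ≤ σ / D →
      ∀ (y : Fin s → ℝ), (∀ i, y i ∈ Set.Icc (-1 : ℝ) 1) →
      ∀ n : ℕ,
        ∃ P : Polynomial ℝ, P.natDegree ≤ n ∧
          ∀ i, ∀ t ∈ Set.Icc (a i) (b i),
            |P.eval t - y i| ≤ (C * δ / D) ^ ((n + 1) / s) := by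
  classical
  set K1 : ℝ := 8 * 3 ^ s / u with hK1
  set K2 : ℝ := 2 ^ (s + 2) / u ^ (s + 2) with hK2
  set K : ℝ := K1 + K2 with hKdef
  refine ⟨4 / u + (s : ℝ) * K, ?_⟩
  intro a b σ δ D hab hdisj hσ hgap hδ hlen hD hdiam huσD y hy n
  set C : ℝ := 4 / u + (s : ℝ) * K with hCdef
  set m : ℕ := (n + 1) / s with hm_def
  have hK1pos : 0 < K1 := by rw [hK1]; positivity
  have hK2pos : 0 < K2 := by rw [hK2]; positivity
  have hKpos : 0 < K := by rw [hKdef]; positivity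
  have hspos : (0:ℝ) < (s:ℝ) := by exact_mod_cast hs
  have hCpos : 0 < C := by
    rw [hCdef]
    have : 0 < 4 / u := by positivity
    nlinarith
  have huD : u * D ≤ σ := (le_div_iff₀ hD).mp huσD
  have hyabs : ∀ i, |y i| ≤ 1 := fun i => abs_le.mpr ⟨(hy i).1, (hy i).2⟩
  have memU : ∀ k, a k ∈ ⋃ i, Set.Icc (a i) (b i) :=
    fun k => Set.mem_iUnion.mpr ⟨k, ⟨le_refl _, hab k⟩⟩
  by_cases hm0 : m = 0
  · refine ⟨0, by simp, ?_⟩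
    intro i t ht
    rw [hm0]
    simpa using hyabs i
  have hm1 : 1 ≤ m := Nat.one_le_iff_ne_zero.mpr hm0
  by_cases hfb : σ < 4 * δ
  · -- fallback case: δ is comparable to D, the trivial polynomial works
    refine ⟨0, by simp, ?_⟩
    intro i t ht
    simp only [Polynomial.eval_zero, zero_sub, abs_neg]
    have hbase : 1 ≤ C * δ / D := by
      have hud : u / 4 ≤ δ / D := by
        rw [div_le_div_iff₀ (by norm_num) hD]
        nlinarith
      have hC4 : 4 / u ≤ C := by
        rw [hCdef]
        nlinarith
      have h1 : (1:ℝ) = (4 / u) * (u / 4) := by field_simp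
      rw [h1, mul_div_assoc]
      apply mul_le_mul hC4 hud (by positivity) (le_of_lt hCpos)
    exact le_trans (hyabs i) (one_le_pow₀ hbase)
  push_neg at hfb
  -- main case: 4 * δ ≤ σ
  have hsep : ∀ i : Fin s, ∀ j, j ≠ i → σ ≤ |a i - a j| := by
    intro i j hj
    exact hgap i j (Ne.symm hj) (a i) ⟨le_refl _, hab i⟩ (a j) ⟨le_refl _, hab j⟩
  have H := fun i : Fin s => construction s m hm1 σ hσ i a (hsep i)
  choose B T hdegB hdegT hevalB hEbound hTbound using H
  set P : Polynomial ℝ :=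
    ∑ j : Fin s, Polynomial.C (y j) * ((B j * T j).comp (X - Polynomial.C (a j))) with hP
  have hsm : m * s ≤ n + 1 := Nat.div_mul_le_self (n + 1) s
  have hms : m ≤ s * m := Nat.le_mul_of_pos_left m (by omega)
  have hdegP : P.natDegree ≤ n := by
    apply Polynomial.natDegree_sum_le_of_forall_le
    intro j _
    refine le_trans (Polynomial.natDegree_C_mul_le _ _) ?_
    rw [Polynomial.natDegree_comp, Polynomial.natDegree_X_sub_C, Nat.mul_one]
    refine le_trans (Polynomial.natDegree_mul_le) ?_
    have h1 : (s - 1) * m = s * m - m := by rw [Nat.sub_mul, Nat.one_mul]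
    have h2 : s * m = m * s := Nat.mul_comm s m
    have := hdegB
    calc (B j).natDegree + (T j).natDegree ≤ (s - 1) * m + (m - 1) :=
          Nat.add_le_add (hdegB j) (hdegT j)
      _ ≤ n := by omega
  refine ⟨P, hdegP, ?_⟩
  intro i t ht
  set x : ℝ := δ / D with hx_def
  have hxpos : 0 < x := by rw [hx_def]; positivity
  set g : Fin s → ℝ := fun j => ((B j) * (T j)).eval (t - a j) with hg
  have hPeval : P.eval t = ∑ j : Fin s, y j * g j := by
    rw [hP, Polynomial.eval_finset_sum]
    apply Finset.sum_congr rfl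
    intro j _
    rw [Polynomial.eval_mul, Polynomial.eval_C, Polynomial.eval_comp]
    simp [hg]
  have htU : t ∈ ⋃ k, Set.Icc (a k) (b k) := Set.mem_iUnion.mpr ⟨i, ht⟩
  -- bound on the own interval
  have hEown : |y i * g i - y i| ≤ (K1 * x) ^ m := by
    have hw2δ : |t - a i| ≤ 2 * δ := by
      rw [abs_le]
      constructor
      · have := ht.1; linarith
      · have := ht.2; have := hlen i; linarith
    have hwσ : |t - a i| ≤ σ / 2 := by linarith
    have h1 : |g i - 1| ≤ (|t - a i| / (σ / 2)) ^ m * (2 * 3 ^ s) ^ m :=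
      hEbound i (t - a i) hwσ
    have h2 : (|t - a i| / (σ / 2)) ^ m * (2 * 3 ^ s) ^ m ≤ (K1 * x) ^ m := by
      rw [← mul_pow]
      apply pow_le_pow_left₀ (by positivity)
      have h3 : |t - a i| / (σ / 2) ≤ 4 * δ / σ := by
        rw [div_le_div_iff₀ (by linarith) hσ]
        nlinarith [abs_nonneg (t - a i)]
      have h4 : 4 * δ / σ ≤ 4 * δ / (u * D) := by
        apply div_le_div_of_nonneg_left (by linarith) (by positivity) huD
      have h5 : (4 * δ / (u * D)) * (2 * 3 ^ s) = K1 * x := by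
        rw [hK1, hx_def]
        field_simp
        ring
      calc |t - a i| / (σ / 2) * (2 * 3 ^ s)
          ≤ (4 * δ / (u * D)) * (2 * 3 ^ s) := by
            apply mul_le_mul_of_nonneg_right (le_trans h3 h4) (by positivity)
        _ = K1 * x := h5
    have h6 : |y i * g i - y i| = |y i| * |g i - 1| := by
      rw [← abs_mul]; congr 1; ring
    rw [h6]
    calc |y i| * |g i - 1| ≤ 1 * |g i - 1| :=
          mul_le_mul_of_nonneg_right (hyabs i) (abs_nonneg _)
      _ = |g i - 1| := one_mul _
      _ ≤ (K1 * x) ^ m := le_trans h1 h2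
  -- bound on the other intervals
  have hgfar : ∀ j ∈ Finset.univ.erase i, |y j * g j| ≤ (K2 * x) ^ m := by
    intro j hj
    have hji : j ≠ i := Finset.ne_of_mem_erase hj
    have hwfar : σ ≤ |t - a j| := hgap i j (Ne.symm hji) t ht (a j) ⟨le_refl _, hab j⟩
    have hwD : |t - a j| ≤ D := hdiam t htU (a j) (memU j)
    have hσD : σ ≤ D := le_trans hwfar hwD
    have hu1 : u ≤ 1 := le_trans huσD ((div_le_one hD).mpr hσD)
    -- rewrite the evaluation of B j
    have hBev : |(B j).eval (t - a j)| ≤ ((2 * δ / σ) * (D / σ) ^ (s - 1 - 1)) ^ m := by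
      rw [hevalB j (t - a j)]
      have hconv : ∀ k ∈ Finset.univ.erase j,
          |(1 + (a j - a k)⁻¹ * (t - a j)) ^ m| = (|t - a k| / |a j - a k|) ^ m := by
        intro k hk
        have hkj : k ≠ j := Finset.ne_of_mem_erase hk
        have hsep' : σ ≤ |a j - a k| := hsep j k hkj
        have hne : a j - a k ≠ 0 := by
          intro h0; rw [h0] at hsep'; simp at hsep'; linarith
        have : 1 + (a j - a k)⁻¹ * (t - a j) = (t - a k) / (a j - a k) := by
          field_simp
          ring
        rw [this, abs_pow, abs_div]
      rw [Finset.abs_prod]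
      rw [Finset.prod_congr rfl hconv]
      rw [Finset.prod_pow]
      apply pow_le_pow_left₀ (Finset.prod_nonneg fun k _ => by positivity)
      have hiMem : i ∈ Finset.univ.erase j := Finset.mem_erase.mpr ⟨Ne.symm hji, Finset.mem_univ i⟩
      rw [← Finset.mul_prod_erase _ _ hiMem]
      have hfac1 : |t - a i| / |a j - a i| ≤ 2 * δ / σ := by
        apply div_le_div₀ (by positivity)
        · rw [abs_le]
          constructor
          · have := ht.1; linarith
          · have := ht.2; have := hlen i; linarith
        · exact hσ
        · exact hsep j i (Ne.symm hji)
      have hfac2 : ∏ k ∈ (Finset.univ.erase j).erase i, |t - a k| / |a j - a k|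
          ≤ (D / σ) ^ (s - 1 - 1) := by
        have hcard : ((Finset.univ.erase j).erase i).card = s - 1 - 1 := by
          rw [Finset.card_erase_of_mem hiMem, Finset.card_erase_of_mem (Finset.mem_univ j)]
          simp
        rw [← hcard, ← Finset.prod_const]
        apply Finset.prod_le_prod
        · intro k _; positivity
        · intro k hk
          have hkj : k ≠ j := Finset.ne_of_mem_erase (Finset.mem_of_mem_erase hk)
          apply div_le_div₀ (by positivity) (hdiam t htU (a k) (memU k)) hσ (hsep j k hkj)
      exact mul_le_mul hfac1 hfac2 (Finset.prod_nonneg fun k _ => by positivity)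
        (by positivity)
    -- bound on T j
    have hwhalf : σ / 2 ≤ |t - a j| := by linarith
    have hTev : |(T j).eval (t - a j)| ≤ (2 * D / σ) ^ (m - 1) * 2 ^ (s * m) := by
      refine le_trans (hTbound j (t - a j) hwhalf) ?_
      apply mul_le_mul_of_nonneg_right _ (by positivity)
      apply pow_le_pow_left₀ (by positivity)
      rw [div_le_div_iff₀ (by linarith) hσ]
      nlinarith
    -- assemble
    have hgj : |g j| ≤ ((2 * δ / σ) * (D / σ) ^ (s - 1 - 1)) ^ m
        * ((2 * D / σ) ^ (m - 1) * 2 ^ (s * m)) := by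
      rw [show g j = ((B j) * (T j)).eval (t - a j) from rfl,
        Polynomial.eval_mul, abs_mul]
      exact mul_le_mul hBev hTev (abs_nonneg _) (by positivity)
    have hDσ : D / σ ≤ 1 / u := by
      rw [div_le_div_iff₀ hσ hu]
      nlinarith
    have h1u : (1:ℝ) ≤ 1 / u := by
      rw [le_div_iff₀ hu]; linarith
    have h2u : (1:ℝ) ≤ 2 / u := by
      rw [le_div_iff₀ hu]; linarith
    have hDσ1 : (1:ℝ) ≤ D / σ := by
      rw [le_div_iff₀ hσ]; linarith
    -- convert to the clean bound
    have hB2 : ((2 * δ / σ) * (D / σ) ^ (s - 1 - 1)) ^ m ≤ ((2 * δ / (u * D)) * (1 / u) ^ s) ^ m := by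
      apply pow_le_pow_left₀ (by positivity)
      apply mul_le_mul
      · apply div_le_div_of_nonneg_left (by linarith) (by positivity) huD
      · calc (D / σ) ^ (s - 1 - 1) ≤ (1 / u) ^ (s - 1 - 1) :=
              pow_le_pow_left₀ (by positivity) hDσ _
          _ ≤ (1 / u) ^ s := pow_le_pow_right₀ h1u (by omega)
      · positivity
      · positivity
    have hT2 : (2 * D / σ) ^ (m - 1) * 2 ^ (s * m) ≤ (2 / u) ^ m * (2 ^ s) ^ m := by
      rw [← pow_mul]
      apply mul_le_mul _ (le_refl _) (by positivity) (by positivity)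
      have h2Dσ : 2 * D / σ ≤ 2 / u := by
        rw [div_le_div_iff₀ hσ hu]
        nlinarith
      calc (2 * D / σ) ^ (m - 1) ≤ (2 / u) ^ (m - 1) :=
            pow_le_pow_left₀ (by positivity) h2Dσ _
        _ ≤ (2 / u) ^ m := pow_le_pow_right₀ h2u (by omega)
    have hfinal : ((2 * δ / (u * D)) * (1 / u) ^ s) ^ m * ((2 / u) ^ m * (2 ^ s) ^ m)
        = (K2 * x) ^ m := by
      rw [← mul_pow, ← mul_pow]
      congr 1
      rw [hK2, hx_def]
      field_simp
      have hu' : u ^ s * u⁻¹ ^ s = 1 := by rw [← mul_pow, mul_inv_cancel₀ hu.ne', one_pow]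
      linear_combination (u ^ 2 * 2 ^ s * 4) * hu'
    have hy1 : |y j * g j| ≤ |g j| := by
      rw [abs_mul]
      calc |y j| * |g j| ≤ 1 * |g j| := mul_le_mul_of_nonneg_right (hyabs j) (abs_nonneg _)
        _ = |g j| := one_mul _
    have hchain : ((2 * δ / σ) * (D / σ) ^ (s - 1 - 1)) ^ m
        * ((2 * D / σ) ^ (m - 1) * 2 ^ (s * m)) ≤ (K2 * x) ^ m := by
      rw [← hfinal]
      apply mul_le_mul hB2 hT2 (by positivity) (by positivity)
    exact le_trans hy1 (le_trans hgj hchain)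
  -- sum up
  have hsplit : P.eval t - y i = (y i * g i - y i) + ∑ j ∈ Finset.univ.erase i, y j * g j := by
    rw [hPeval, ← Finset.add_sum_erase Finset.univ (fun j => y j * g j) (Finset.mem_univ i)]
    ring
  rw [hsplit]
  have hKx1 : (K1 * x) ^ m ≤ (K * x) ^ m := by
    apply pow_le_pow_left₀ (by positivity)
    apply mul_le_mul_of_nonneg_right _ (le_of_lt hxpos)
    rw [hKdef]; linarith
  have hKx2 : (K2 * x) ^ m ≤ (K * x) ^ m := by
    apply pow_le_pow_left₀ (by positivity)
    apply mul_le_mul_of_nonneg_right _ (le_of_lt hxpos)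
    rw [hKdef]; linarith
  calc |(y i * g i - y i) + ∑ j ∈ Finset.univ.erase i, y j * g j|
      ≤ |y i * g i - y i| + |∑ j ∈ Finset.univ.erase i, y j * g j| := abs_add_le _ _
    _ ≤ (K * x) ^ m + ∑ j ∈ Finset.univ.erase i, (K * x) ^ m := by
        apply add_le_add (le_trans hEown hKx1)
        refine le_trans (Finset.abs_sum_le_sum_abs _ _) ?_
        exact Finset.sum_le_sum fun j hj => le_trans (hgfar j hj) hKx2
    _ = (K * x) ^ m + ((s - 1 : ℕ) : ℝ) * (K * x) ^ m := by
        rw [Finset.sum_const, Finset.card_erase_of_mem (Finset.mem_univ i)]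
        simp [nsmul_eq_mul]
    _ ≤ (s : ℝ) * (K * x) ^ m := by
        have : ((s - 1 : ℕ) : ℝ) ≤ (s : ℝ) - 1 := by
          push_cast [Nat.cast_sub hs]
          simp
        nlinarith [pow_nonneg (le_of_lt (mul_pos hKpos hxpos)) m]
    _ ≤ (s : ℝ) ^ m * (K * x) ^ m := by
        apply mul_le_mul_of_nonneg_right _ (pow_nonneg (by positivity) m)
        exact le_self_pow₀ (by exact_mod_cast hs) hm0
    _ = ((s : ℝ) * (K * x)) ^ m := (mul_pow _ _ _).symm
    _ ≤ (C * δ / D) ^ m := by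
        apply pow_le_pow_left₀ (by positivity)
        rw [mul_div_assoc, ← hx_def]
        have : (s:ℝ) * (K * x) = ((s:ℝ) * K) * x := by ring
        rw [this]
        apply mul_le_mul_of_nonneg_right _ (le_of_lt hxpos)
        rw [hCdef]
        have : 0 < 4 / u := by positivity
        linarith
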